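/- Let P be a finite atomic lattice and let M = {m_p} be a labeling of elements of P by monomials such that (1) every meet-irreducible element has a non-trivial label, and (2) whenever gcd(m_p, m_q) ≠ 1, p and q are comparable. Define f(b) = ∏_{p ∈ ⌈b⌉^c} m_p for b ∈ P. Then f(b) = lcm{ f(a) : a an atom, a ≤ b } for every b ∈ P. -/

import Mathlib

open Classical in
/-- Let `P` be a finite atomic lattice with a monomial labeling `m` (monomials in `k`
variables as exponent vectors `Fin k → ℕ`, with the trivial label `1` being `0`,
products of monomials being sums of vectors and lcm being pointwise `sup`) such that
(1) every meet-irreducible element is non-trivially labeled, and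
(2) any two elements whose labels share a variable are comparable.
Then `f b = ∏_{p ∈ ⌈b⌉ᶜ} m p` satisfies `f b = lcm { f a : a an atom, a ≤ b }`. -/
theorem stmt_16 (k : ℕ) (P : Type) [Fintype P] [Lattice P] [OrderBot P]
    (hatomic : ∀ b : P, IsLUB {a : P | IsAtom a ∧ a ≤ b} b)
    (m : P → (Fin k → ℕ))
    (h1 : ∀ p : P, (∀ a b : P, p < a → p < b → a ⊓ b ≠ p) → m p ≠ 0)
    (h2 : ∀ p q : P, m p ⊓ m q ≠ 0 → p ≤ q ∨ q ≤ p)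
    (f : P → (Fin k → ℕ))
    (hf : ∀ b : P, f b = ∑ p ∈ Finset.univ.filter (fun p : P => ¬ b ≤ p), m p) :
    ∀ b : P, f b = (Finset.univ.filter (fun a : P => IsAtom a ∧ a ≤ b)).sup f := by
  intro b
  apply le_antisymm
  · -- f b ≤ sup over atoms
    rw [Pi.le_def]
    intro i
    rw [Finset.sup_apply, hf b, Finset.sum_apply]
    set Fb := Finset.univ.filter (fun p : P => ¬ b ≤ p) with hFb
    set T := Fb.filter (fun p => m p i ≠ 0) with hTdef
    have hsum : ∑ p ∈ Fb, m p i = ∑ p ∈ T, m p i := by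
      rw [hTdef, Finset.sum_filter_ne_zero]
    rw [hsum]
    rcases T.eq_empty_or_nonempty with hTe | hTne
    · simp [hTe]
    · obtain ⟨q, hqT, hqmax⟩ := T.exists_maximal hTne
      have hqb : ¬ b ≤ q := by
        have := hqT
        rw [hTdef, hFb, Finset.mem_filter, Finset.mem_filter] at this
        exact this.1.2
      have hqi : m q i ≠ 0 := by
        have := hqT
        rw [hTdef, Finset.mem_filter] at this
        exact this.2
      -- all elements of T are ≤ q
      have hchain : ∀ p ∈ T, p ≤ q := by
        intro p hp
        have hpi : m p i ≠ 0 := by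
          have := hp; rw [hTdef, Finset.mem_filter] at this; exact this.2
        have hne : m p ⊓ m q ≠ 0 := by
          intro h
          have : (m p ⊓ m q) i = 0 := by rw [h]; rfl
          rw [Pi.inf_apply] at this
          rcases Nat.min_eq_zero_iff.mp this with h' | h'
          · exact hpi h'
          · exact hqi h'
        rcases h2 p q hne with h | h
        · exact h
        · rcases lt_or_eq_of_le h with h' | h'
          · exact absurd h' (fun hlt => hlt.not_ge (hqmax hp hlt.le))
          · exact le_of_eq h'.symm
      -- find an atom a ≤ b with ¬ a ≤ q
      have hatom : ∃ a : P, (IsAtom a ∧ a ≤ b) ∧ ¬ a ≤ q := by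
        by_contra h
        push_neg at h
        have : q ∈ upperBounds {a : P | IsAtom a ∧ a ≤ b} := by
          intro x hx
          exact h x hx
        exact hqb ((hatomic b).2 this)
      obtain ⟨a, ⟨ha_atom, hab⟩, haq⟩ := hatom
      have haMem : a ∈ Finset.univ.filter (fun a : P => IsAtom a ∧ a ≤ b) := by
        simp [ha_atom, hab]
      refine le_trans ?_ (Finset.le_sup (f := fun a => f a i) haMem)
      show ∑ p ∈ T, m p i ≤ f a i
      rw [hf a, Finset.sum_apply]
      apply Finset.sum_le_sum_of_subset
      intro p hp
      rw [Finset.mem_filter]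
      refine ⟨Finset.mem_univ p, ?_⟩
      intro hap
      exact haq (le_trans hap (hchain p hp))
  · -- sup ≤ f b
    apply Finset.sup_le
    intro a ha
    rw [Finset.mem_filter] at ha
    rw [hf a, hf b]
    apply Finset.sum_le_sum_of_subset
    intro p hp
    rw [Finset.mem_filter] at hp ⊢
    exact ⟨hp.1, fun hbp => hp.2 (le_trans ha.2.2 hbp)⟩
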